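/- Let 𝒯₁ be a testing design feasible for (N, K). Then there exists a testing design 𝒯₂ that is feasible for (N, K), is in systematic form, and has at most as many tests as 𝒯₁ (|𝒯₂| ≤ |𝒯₁|). -/

import Mathlib

/-- The outcome of a cascaded test `t` (a list of items) on a defective set `S`:
the first element of `t` belonging to `S`, or `none` if there is none. -/
def outcome {N : ℕ} (t : List (Fin N)) (S : Finset (Fin N)) : Option (Fin N) :=
  (t.filter (fun x => x ∈ S)).head?

/-- A testing design `𝒯` (an indexed family of tests) is feasible for `(N, K)` if the
map sending each `S ⊆ Fin N` with `|S| ≤ K` to its vector of test outcomes is injective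
on `{S | |S| ≤ K}`. -/
def Feasible (N K : ℕ) {T : ℕ} (𝒯 : Fin T → List (Fin N)) : Prop :=
  Set.InjOn (fun (S : Finset (Fin N)) => fun i : Fin T => outcome (𝒯 i) S)
    {S : Finset (Fin N) | S.card ≤ K}

/-- `TNK N K`: the minimum number of tests over all duplicate-free testing designs
feasible for `(N, K)`. -/
noncomputable def TNK (N K : ℕ) : ℕ :=
  sInf {T : ℕ | ∃ 𝒯 : Fin T → List (Fin N), (∀ i, (𝒯 i).Nodup) ∧ Feasible N K 𝒯}

/-- `fT 𝒯 S v`: the number of tests in the design `𝒯` whose outcome on `S` is `some v`. -/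
def fT {N T : ℕ} (𝒯 : Fin T → List (Fin N)) (S : Finset (Fin N)) (v : Fin N) : ℕ :=
  (Finset.univ.filter (fun i : Fin T => outcome (𝒯 i) S = some v)).card

/-- A design is in systematic form if every test is nonempty and the first element of
each test does not occur in any other test. -/
def Systematic {N T : ℕ} (𝒯 : Fin T → List (Fin N)) : Prop :=
  ∀ i : Fin T, 𝒯 i ≠ [] ∧ ∀ u : Fin N, (𝒯 i).head? = some u → ∀ j : Fin T, j ≠ i → u ∉ 𝒯 j

lemma outcome_mem {N} {t : List (Fin N)} {S} {u} (h : outcome t S = some u) :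
    u ∈ S := by
  unfold outcome at h
  have hu : u ∈ t.filter (fun x => x ∈ S) := List.mem_of_mem_head? (by simp [h])
  simpa using (List.mem_filter.mp hu).2

lemma outcome_head {N} {t : List (Fin N)} {u} (h : t.head? = some u) (S : Finset (Fin N)) :
    (outcome t S = some u ↔ u ∈ S) := by
  cases t with
  | nil => simp at h
  | cons v l =>
    simp only [List.head?_cons, Option.some.injEq] at h
    subst h
    constructor
    · exact outcome_mem
    · intro hu; unfold outcome; simp [List.filter_cons, hu]

def recon {N : ℕ} (a : List (Fin N)) (u : Fin N) (hu : Bool) (o : Option (Fin N)) :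
    Option (Fin N) :=
  if hu then
    (match o with
     | some x => if x ∈ a then some x else some u
     | none => some u)
  else o

lemma recon_spec {N : ℕ} (a b : List (Fin N)) (u : Fin N) (S : Finset (Fin N))
    (hdisj : ∀ x ∈ b, x ∉ a) :
    outcome (a ++ u :: b) S = recon a u (decide (u ∈ S)) (outcome (a ++ b) S) := by
  unfold outcome recon
  by_cases hu : u ∈ S
  · simp only [hu, decide_true, if_true, List.filter_append, List.filter_cons, hu,
      decide_true, if_true]
    rcases hfa : a.filter (fun x => x ∈ S) with _ | ⟨y, l⟩
    · simp only [List.nil_append, List.head?_cons]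
      rcases hfb : b.filter (fun x => x ∈ S) with _ | ⟨z, l'⟩
      · simp
      · have hz : z ∈ b := by
          have : z ∈ b.filter (fun x => x ∈ S) := by rw [hfb]; exact List.mem_cons_self
          exact (List.mem_filter.mp this).1
        simp [hdisj z hz]
    · have hy : y ∈ a := by
        have : y ∈ a.filter (fun x => x ∈ S) := by rw [hfa]; exact List.mem_cons_self
        exact (List.mem_filter.mp this).1
      simp [hy]
  · simp [List.filter_append, List.filter_cons, hu]

lemma main_aux (N K : ℕ) (n : ℕ) : ∀ T (𝒯 : Fin T → List (Fin N)),
    T + ∑ i, (𝒯 i).length = n → (∀ i, (𝒯 i).Nodup) → Feasible N K 𝒯 →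
    ∃ T₂ : ℕ, T₂ ≤ T ∧ ∃ 𝒯₂ : Fin T₂ → List (Fin N),
      (∀ i, (𝒯₂ i).Nodup) ∧ Feasible N K 𝒯₂ ∧ Systematic 𝒯₂ := by
  induction n using Nat.strong_induction_on with
  | _ n IH =>
  intro T 𝒯 hn hnd hF
  by_cases hsys : Systematic 𝒯
  · exact ⟨T, le_refl T, 𝒯, hnd, hF, hsys⟩
  simp only [Systematic, not_forall] at hsys
  obtain ⟨i, hi⟩ := hsys
  rw [not_and_or] at hi
  rcases hi with hi | hi
  · -- the test i is empty; drop it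
    push_neg at hi
    have hT : T ≠ 0 := by rintro rfl; exact i.elim0
    obtain ⟨T', rfl⟩ := Nat.exists_eq_succ_of_ne_zero hT
    set 𝒯' : Fin T' → List (Fin N) := fun j => 𝒯 (i.succAbove j) with h𝒯'
    have hsum : ∑ k, (𝒯 k).length = ∑ j, (𝒯' j).length := by
      rw [Fin.sum_univ_succAbove (fun k => (𝒯 k).length) i, hi]
      simp
      rfl
    have hF' : Feasible N K 𝒯' := by
      intro S hS S' hS' h
      refine hF hS hS' ?_
      funext k
      rcases eq_or_ne k i with rfl | hk
      · simp [outcome, hi]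
      · obtain ⟨j, rfl⟩ := Fin.exists_succAbove_eq hk
        exact congrFun h j
    obtain ⟨T₂, hT₂, rest⟩ := IH (T' + ∑ j, (𝒯' j).length) (by omega) T' 𝒯' rfl
      (fun j => hnd _) hF'
    exact ⟨T₂, by omega, rest⟩
  · -- head u of test i occurs in another test j; remove it from 𝒯 j
    push_neg at hi
    obtain ⟨u, hu, j, hji, hujmem⟩ := hi
    obtain ⟨a, b, hab⟩ := List.append_of_mem hujmem
    have hndj := hnd j
    rw [hab] at hndj
    have hdisj : ∀ x ∈ b, x ∉ a := by
      intro x hx hxa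
      exact (List.disjoint_of_nodup_append hndj) hxa (List.mem_cons_of_mem _ hx)
    set 𝒯' : Fin T → List (Fin N) := Function.update 𝒯 j (a ++ b) with h𝒯'
    have h𝒯'i : 𝒯' i = 𝒯 i := Function.update_of_ne (Ne.symm hji) _ _
    have hnd' : ∀ k, (𝒯' k).Nodup := by
      intro k
      rcases eq_or_ne k j with rfl | hk
      · simp only [h𝒯', Function.update_self]
        exact hndj.sublist (List.Sublist.append_left (List.sublist_cons_self _ _) a)
      · rw [h𝒯', Function.update_of_ne hk]; exact hnd k
    have h𝒯'k : ∀ k, k ≠ j → 𝒯' k = 𝒯 k := fun k hk => Function.update_of_ne hk _ _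
    have h𝒯'j : 𝒯' j = a ++ b := Function.update_self _ _ _
    have hF' : Feasible N K 𝒯' := by
      intro S hS S' hS' h
      refine hF hS hS' ?_
      have huSS' : (u ∈ S) ↔ (u ∈ S') := by
        rw [← outcome_head hu S, ← outcome_head hu S']
        have := congrFun h i
        simp only at this
        rw [h𝒯'i] at this
        rw [this]
      funext k
      rcases eq_or_ne k j with rfl | hk
      · simp only
        rw [hab, recon_spec a b u S hdisj, recon_spec a b u S' hdisj]
        have h1 : decide (u ∈ S) = decide (u ∈ S') := by
          simp [huSS']
        have h2 : outcome (a ++ b) S = outcome (a ++ b) S' := by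
          have := congrFun h k
          simp only at this
          rwa [h𝒯'j] at this
        rw [h1, h2]
      · have := congrFun h k
        simp only at this
        rwa [h𝒯'k k hk] at this
    have hlen : ∑ k, (𝒯' k).length < ∑ k, (𝒯 k).length := by
      refine Finset.sum_lt_sum (fun k _ => ?_) ⟨j, Finset.mem_univ j, ?_⟩
      · rcases eq_or_ne k j with rfl | hk
        · rw [h𝒯'j, hab]; simp
        · rw [h𝒯'k k hk]
      · rw [h𝒯'j, hab]; simp
    obtain ⟨T₂, hT₂, rest⟩ := IH (T + ∑ k, (𝒯' k).length) (by omega) T 𝒯' rfl hnd' hF'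
    exact ⟨T₂, hT₂, rest⟩

theorem stmt4 (N K : ℕ) (T₁ : ℕ) (𝒯₁ : Fin T₁ → List (Fin N))
    (hnd₁ : ∀ i, (𝒯₁ i).Nodup) (hF₁ : Feasible N K 𝒯₁) :
    ∃ T₂ : ℕ, T₂ ≤ T₁ ∧ ∃ 𝒯₂ : Fin T₂ → List (Fin N),
      (∀ i, (𝒯₂ i).Nodup) ∧ Feasible N K 𝒯₂ ∧ Systematic 𝒯₂ := by
  obtain ⟨T₂, h, rest⟩ := main_aux N K (T₁ + ∑ i, (𝒯₁ i).length) T₁ 𝒯₁ rfl hnd₁ hF₁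
  exact ⟨T₂, h, rest⟩
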